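/- If a bipartite graph on n vertices has a nonsingular adjacency matrix, then deleting any single vertex decreases the rank of the adjacency matrix by exactly 2. -/

import Mathlib

open Matrix


section aux
variable {R : Type*} [Field R]

private noncomputable def prodSubEquiv {M N : Type*} [AddCommGroup M] [AddCommGroup N]
    [Module R M] [Module R N] (p : Submodule R M) (q : Submodule R N) :
    (p.prod q) ≃ₗ[R] p × q where
  toFun x := (⟨x.1.1, x.2.1⟩, ⟨x.1.2, x.2.2⟩)
  invFun x := ⟨(x.1.1, x.2.1), ⟨x.1.2, x.2.2⟩⟩
  left_inv x := rfl
  right_inv x := rfl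
  map_add' x y := rfl
  map_smul' c x := rfl

private lemma range_prodMap' {M N M' N' : Type*} [AddCommGroup M] [AddCommGroup N]
    [AddCommGroup M'] [AddCommGroup N'] [Module R M] [Module R N] [Module R M'] [Module R N']
    (f : M →ₗ[R] M') (g : N →ₗ[R] N') :
    LinearMap.range (f.prodMap g) = (LinearMap.range f).prod (LinearMap.range g) := by
  ext ⟨x, y⟩
  simp only [LinearMap.mem_range, Submodule.mem_prod]
  constructor
  · rintro ⟨⟨a, b⟩, h⟩
    simp only [LinearMap.prodMap_apply, Prod.mk.injEq] at h
    exact ⟨⟨a, h.1⟩, ⟨b, h.2⟩⟩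
  · rintro ⟨⟨a, ha⟩, ⟨b, hb⟩⟩
    exact ⟨(a, b), by simp [ha, hb]⟩

private lemma rank_fromBlocks_zero {m n o p : Type*} [Fintype m] [Fintype n] [Fintype o]
    [Fintype p] (B : Matrix m p ℝ) (C : Matrix o n ℝ) :
    (fromBlocks 0 B C 0).rank = B.rank + C.rank := by
  classical
  set E : ((n ⊕ p) → ℝ) ≃ₗ[ℝ] (p → ℝ) × (n → ℝ) :=
    (LinearEquiv.sumArrowLequivProdArrow n p ℝ ℝ) ≪≫ₗ
    (LinearEquiv.prodComm ℝ (n → ℝ) (p → ℝ)) with hE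
  have key : (fromBlocks 0 B C 0).mulVecLin =
      ((LinearEquiv.sumArrowLequivProdArrow m o ℝ ℝ).symm.toLinearMap ∘ₗ
        B.mulVecLin.prodMap C.mulVecLin) ∘ₗ E.toLinearMap := by
    apply LinearMap.ext
    intro x
    funext i
    cases i <;>
      simp [hE, mulVecLin_apply, fromBlocks_mulVec, LinearEquiv.sumArrowLequivProdArrow, Equiv.sumArrowEquivProdArrow]
  rw [Matrix.rank, key, LinearMap.range_comp_of_range_eq_top _ (LinearEquiv.range E),
    LinearMap.range_comp, LinearEquiv.finrank_map_eq, range_prodMap']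
  rw [(prodSubEquiv _ _).finrank_eq, Module.finrank_prod]
  rfl

end aux

section aux2

private lemma finrank_sup_le' {K V : Type*} [Field K] [AddCommGroup V] [Module K V]
    (s t : Submodule K V) [FiniteDimensional K s] [FiniteDimensional K t] :
    Module.finrank K ↥(s ⊔ t) ≤ Module.finrank K s + Module.finrank K t := by
  have := Submodule.finrank_sup_add_finrank_inf_eq s t
  omega

/-- deleting one column drops rank by at most one -/
private lemma rank_le_rank_delete_col_add_one {m V : Type*} [Fintype m] [Fintype V]
    [DecidableEq V] (A : Matrix m V ℝ) (v : V) :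
    A.rank ≤ (A.submatrix id (fun u : {u : V // u ≠ v} => u.val)).rank + 1 := by
  classical
  set S := A.submatrix id (fun u : {u : V // u ≠ v} => u.val) with hS
  rw [rank_eq_finrank_span_cols, rank_eq_finrank_span_cols]
  unfold Matrix.col
  have hsub : Set.range Aᵀ ⊆ (Set.range Sᵀ ∪ {Aᵀ v}) := by
    rintro _ ⟨u, rfl⟩
    by_cases h : u = v
    · subst h; exact Or.inr rfl
    · exact Or.inl ⟨⟨u, h⟩, rfl⟩
  have hle : Submodule.span ℝ (Set.range Aᵀ) ≤
      Submodule.span ℝ (Set.range Sᵀ) ⊔ Submodule.span ℝ {Aᵀ v} := by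
    rw [← Submodule.span_union]
    exact Submodule.span_mono hsub
  refine le_trans (Submodule.finrank_mono hle) (le_trans (finrank_sup_le' _ _) ?_)
  gcongr
  by_cases h : Aᵀ v = 0
  · rw [h, Submodule.span_zero_singleton]; simp
  · exact le_of_eq (finrank_span_singleton h)

private lemma even_rank_of_bip {W : Type*} [Fintype W] [DecidableEq W] (M : Matrix W W ℝ)
    (hsym : Mᵀ = M) (c : W → Fin 2) (hc : ∀ i j, M i j ≠ 0 → c i ≠ c j) : Even M.rank := by
  classical
  set P : W → Prop := fun w => c w = 0 with hP
  set e : {w // P w} ⊕ {w // ¬ P w} ≃ W := Equiv.sumCompl P with he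
  set B := M.submatrix (fun i : {w // P w} => i.val) (fun j : {w // ¬ P w} => j.val) with hB
  set C := M.submatrix (fun i : {w // ¬ P w} => i.val) (fun j : {w // P w} => j.val) with hC
  have h2 : ∀ a b : Fin 2, a ≠ 0 → b ≠ 0 → a = b := by decide
  have hMe : M.submatrix e e = fromBlocks 0 B C 0 := by
    ext i j
    rcases i with i | i <;> rcases j with j | j <;>
      simp only [submatrix_apply, he, Equiv.sumCompl_apply_inl, Equiv.sumCompl_apply_inr,
        fromBlocks_apply₁₁, fromBlocks_apply₁₂, fromBlocks_apply₂₁, fromBlocks_apply₂₂,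
        hB, hC, Matrix.zero_apply]
    · by_contra h
      exact hc _ _ h (by rw [i.2, j.2])
    · by_contra h
      exact hc _ _ h (h2 _ _ i.2 j.2)
  have hCB : C = Bᵀ := by
    ext i j
    simp only [hC, hB, submatrix_apply, transpose_apply]
    exact (congrFun (congrFun hsym _) _).symm
  have : M.rank = (M.submatrix e e).rank := (rank_submatrix M e e).symm
  rw [this, hMe, rank_fromBlocks_zero, hCB, rank_transpose]
  exact ⟨B.rank, rfl⟩

end aux2

/-- if a bipartite graph on n vertices has a nonsingular adjacency matrix,
then deleting any single vertex decreases the rank of the adjacency matrix by exactly 2. -/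
theorem stmt_15 {V : Type*} [Fintype V] [DecidableEq V]
    (G : SimpleGraph V) [DecidableRel G.Adj]
    (hbip : G.Colorable 2)
    (hdet : (G.adjMatrix ℝ).det ≠ 0)
    (v : V) :
    ((G.adjMatrix ℝ).submatrix (fun u : {u : V // u ≠ v} => u.val)
      (fun u : {u : V // u ≠ v} => u.val)).rank = Fintype.card V - 2 := by
  classical
  set A := G.adjMatrix ℝ with hA
  set f : {u : V // u ≠ v} → V := fun u => u.val with hf
  set M := A.submatrix f f with hM
  set n := Fintype.card V with hn
  obtain ⟨col⟩ := hbip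
  have hcol : ∀ i j : V, A i j ≠ 0 → col i ≠ col j := by
    intro i j h
    rw [hA, SimpleGraph.adjMatrix_apply] at h
    exact col.valid (by by_contra hadj; simp [hadj] at h)
  have hAsym : Aᵀ = A := G.transpose_adjMatrix
  -- rank A = n
  have hrA : A.rank = n := A.rank_of_isUnit ((isUnit_iff_isUnit_det A).mpr hdet.isUnit)
  -- n is even
  have hneven : Even n := by
    rw [← hrA]; exact even_rank_of_bip A hAsym col hcol
  -- rank M is even
  have hMsym : Mᵀ = M := by
    rw [hM, transpose_submatrix, hAsym]
  have hMeven : Even M.rank :=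
    even_rank_of_bip M hMsym (fun u => col u.val) (fun i j h => hcol i.val j.val h)
  -- card of subtype
  have hcard : Fintype.card {u : V // u ≠ v} = n - 1 := by
    simp [hn]
  -- upper bound
  have hub : M.rank ≤ n - 1 := hcard ▸ M.rank_le_card_width
  -- lower bound : n ≤ M.rank + 2
  have hlb : n ≤ M.rank + 2 := by
    set S := A.submatrix id f with hS
    have h1 : A.rank ≤ S.rank + 1 := rank_le_rank_delete_col_add_one A v
    have h2 : S.rank ≤ M.rank + 1 := by
      have hST : Sᵀ.rank ≤ (Sᵀ.submatrix id f).rank + 1 := rank_le_rank_delete_col_add_one Sᵀ v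
      have e1 : Sᵀ.submatrix id f = Mᵀ := by
        rw [hM, hS]; ext i j; simp
      rw [e1, rank_transpose, rank_transpose] at hST
      exact hST
    omega
  have hnpos : 0 < n := Fintype.card_pos_iff.mpr ⟨v⟩
  obtain ⟨a, ha⟩ := hneven
  obtain ⟨b, hb⟩ := hMeven
  omega
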